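/- Equivalence of monotonicity and differential positivity in ℝⁿ: let φ_t be the flow of a C¹ vector field f on ℝⁿ and C a closed convex cone. Then φ is monotone with respect to the order induced by C (x ≤ y ⟹ φ_t(x) ≤ φ_t(y) for all t ≥ 0, where x ≤ y means y − x ∈ C) if and only if the derivative dφ_t(x) maps C into C for every x ∈ ℝⁿ and t ≥ 0. -/

import Mathlib

/-- Equivalence of monotonicity and differential positivity in `ℝⁿ`: the flow
`φ_t` of a `C¹` vector field `f` is monotone with respect to the order induced by
a closed convex cone `C` iff its derivative `dφ_t(x)` maps `C` into `C` for every
`x` and `t ≥ 0`. -/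
theorem monotone_iff_differentially_positive {n : ℕ}
    (C : Set (EuclideanSpace ℝ (Fin n)))
    (hclosed : IsClosed C) (hadd : ∀ a ∈ C, ∀ b ∈ C, a + b ∈ C)
    (hsmul : ∀ r : ℝ, 0 ≤ r → ∀ a ∈ C, r • a ∈ C)
    (f : EuclideanSpace ℝ (Fin n) → EuclideanSpace ℝ (Fin n))
    (hf : ContDiff ℝ 1 f)
    (φ : ℝ → EuclideanSpace ℝ (Fin n) → EuclideanSpace ℝ (Fin n))
    (hφ0 : ∀ x, φ 0 x = x)
    (hflow : ∀ x : EuclideanSpace ℝ (Fin n), ∀ t : ℝ,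
      HasDerivAt (fun s => φ s x) (f (φ t x)) t)
    (D : ℝ → EuclideanSpace ℝ (Fin n) →
      (EuclideanSpace ℝ (Fin n) →L[ℝ] EuclideanSpace ℝ (Fin n)))
    (hD : ∀ t : ℝ, 0 ≤ t → ∀ x, HasFDerivAt (φ t) (D t x) x)
    (hDcont : ∀ t : ℝ, 0 ≤ t → Continuous (D t)) :
    (∀ x y : EuclideanSpace ℝ (Fin n), y - x ∈ C →
        ∀ t : ℝ, 0 ≤ t → φ t y - φ t x ∈ C) ↔
      (∀ x : EuclideanSpace ℝ (Fin n), ∀ t : ℝ, 0 ≤ t → ∀ v ∈ C, D t x v ∈ C) := by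
  have hconv : Convex ℝ C := by
    intro a ha b hb p q hp hq hpq
    exact hadd _ (hsmul p hp a ha) _ (hsmul q hq b hb)
  constructor
  · intro hmono x t ht v hv
    -- the map s ↦ φ t (x + s • v) has derivative D t x v at 0
    have hline : HasDerivAt (fun s : ℝ => x + s • v) v 0 := by
      simpa using ((hasDerivAt_id (0:ℝ)).smul_const v).const_add x
    have hg : HasDerivAt (fun s : ℝ => φ t (x + s • v)) (D t x v) 0 := by
      have hDx : HasFDerivAt (φ t) (D t x) (x + (0:ℝ) • v) := by
        simpa using hD t ht x
      exact hDx.comp_hasDerivAt 0 hline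
    have hslope := hasDerivAt_iff_tendsto_slope.mp hg
    have hslope' : Filter.Tendsto (slope (fun s : ℝ => φ t (x + s • v)) 0)
        (nhdsWithin 0 (Set.Ioi 0)) (nhds (D t x v)) :=
      hslope.mono_left (nhdsWithin_mono 0 fun s hs => ne_of_gt hs)
    refine hclosed.mem_of_tendsto hslope' ?_
    filter_upwards [self_mem_nhdsWithin] with s hs
    have hs' : (0:ℝ) < s := hs
    have hmem : (x + s • v) - x ∈ C := by
      simpa using hsmul s hs'.le v hv
    have := hmono x (x + s • v) hmem t ht
    have : s⁻¹ • (φ t (x + s • v) - φ t x) ∈ C :=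
      hsmul s⁻¹ (inv_nonneg.mpr hs'.le) _ this
    simpa [slope, hφ0] using this
  · intro hpos x y hxy t ht
    set v := y - x with hv
    set g : ℝ → EuclideanSpace ℝ (Fin n) := fun s => φ t (x + s • v) with hgdef
    set g' : ℝ → EuclideanSpace ℝ (Fin n) := fun s => D t (x + s • v) v with hg'def
    have hderiv : ∀ s ∈ Set.uIcc (0:ℝ) 1, HasDerivAt g (g' s) s := by
      intro s _
      have hline : HasDerivAt (fun u : ℝ => x + u • v) v s := by
        simpa using ((hasDerivAt_id s).smul_const v).const_add x
      have := (hD t ht (x + s • v)).comp_hasDerivAt s hline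
      exact this
    have hg'cont : Continuous g' := by
      have h1 : Continuous fun s : ℝ => x + s • v := by fun_prop
      have h2 : Continuous fun s : ℝ => D t (x + s • v) := (hDcont t ht).comp h1
      exact (ContinuousLinearMap.apply ℝ (EuclideanSpace ℝ (Fin n)) v).continuous.comp h2
    have hint : IntervalIntegrable g' MeasureTheory.volume 0 1 :=
      hg'cont.intervalIntegrable 0 1
    have heq : ∫ s in (0:ℝ)..1, g' s = g 1 - g 0 :=
      intervalIntegral.integral_eq_sub_of_hasDerivAt hderiv hint
    have hg1 : g 1 = φ t y := by simp [hgdef, hv]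
    have hg0 : g 0 = φ t x := by simp [hgdef]
    have hrestr : (∫ s in (0:ℝ)..1, g' s)
        = ∫ s, g' s ∂(MeasureTheory.volume.restrict (Set.Ioc (0:ℝ) 1)) := by
      rw [intervalIntegral.integral_of_le (by norm_num : (0:ℝ) ≤ 1)]
    have hprob : MeasureTheory.IsProbabilityMeasure
        (MeasureTheory.volume.restrict (Set.Ioc (0:ℝ) 1)) := by
      constructor
      simp
    have hmemInt : (∫ s, g' s ∂(MeasureTheory.volume.restrict (Set.Ioc (0:ℝ) 1))) ∈ C := by
      refine hconv.integral_mem hclosed ?_ ?_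
      · filter_upwards with s
        exact hpos (x + s • v) t ht v hxy
      · exact hg'cont.integrableOn_Ioc
    have : φ t y - φ t x = ∫ s in (0:ℝ)..1, g' s := by rw [heq, hg1, hg0]
    rw [this, hrestr]
    exact hmemInt
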